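/- arXiv:0901.1587 — 2 statements merged into one kernel-verified Lean document; each statement's English description precedes it below -/
import Mathlib

section
/- Every positive definite quadratic form Q in d variables that attains Hermite's constant, i.e. with λ(Q)/(det Q)^{1/d} = H_d, is perfect. -/
open Matrix

/-- The real vector corresponding to an integral vector. -/
def castVec {d : ℕ} (x : Fin d → ℤ) : Fin d → ℝ := fun i => (x i : ℝ)

/-- Evaluation `Q[x] = xᵗ Q x` of a quadratic form at an integral vector. -/
def qeval {d : ℕ} (Q : Matrix (Fin d) (Fin d) ℝ) (x : Fin d → ℤ) : ℝ :=
  castVec x ⬝ᵥ Q.mulVec (castVec x)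

/-- `Q` is a perfect positive definite quadratic form with arithmetical minimum
`lam`. -/
def IsPerfect {d : ℕ} (Q : Matrix (Fin d) (Fin d) ℝ) (lam : ℝ) : Prop :=
  Q.PosDef ∧ IsLeast {r : ℝ | ∃ x : Fin d → ℤ, x ≠ 0 ∧ qeval Q x = r} lam ∧
    ∀ Q' : Matrix (Fin d) (Fin d) ℝ, Q'.IsSymm →
      (∀ x : Fin d → ℤ, qeval Q x = lam → qeval Q' x = lam) → Q' = Q


lemma det_one_add_psd {n : Type*} [Fintype n] [DecidableEq n]
    {S : Matrix n n ℝ} (hS : S.PosSemidef) (hne : S ≠ 0) :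
    1 < (1 + S).det := by
  have h := hS.isHermitian
  set U : Matrix n n ℝ := (h.eigenvectorUnitary : Matrix n n ℝ) with hU
  have hUU : U * star U = 1 := Matrix.mem_unitaryGroup_iff.mp h.eigenvectorUnitary.2
  have hUU' : star U * U = 1 := Matrix.mem_unitaryGroup_iff'.mp h.eigenvectorUnitary.2
  have hdiag : (RCLike.ofReal ∘ h.eigenvalues : n → ℝ) = h.eigenvalues := by
    funext i; simp
  have hspec : S = U * Matrix.diagonal h.eigenvalues * star U := by
    simpa [hdiag] using h.spectral_theorem
  have hone : (1 : Matrix n n ℝ) + S = U * Matrix.diagonal (fun i => 1 + h.eigenvalues i) * star U := by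
    have hd2 : Matrix.diagonal (fun i => 1 + h.eigenvalues i)
        = 1 + Matrix.diagonal h.eigenvalues := by
      rw [← Matrix.diagonal_one, ← Matrix.diagonal_add]
    rw [hd2, Matrix.mul_add, Matrix.add_mul, Matrix.mul_one, hUU, ← hspec]
  have hnonneg : ∀ i, 0 ≤ h.eigenvalues i := fun i => hS.eigenvalues_nonneg i
  have hex : ∃ j, 0 < h.eigenvalues j := by
    by_contra hc
    push_neg at hc
    have hz : h.eigenvalues = fun _ => 0 := funext fun i => le_antisymm (hc i) (hnonneg i)
    apply hne
    rw [hspec, hz]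
    simp [Matrix.diagonal_zero]
  obtain ⟨j, hj⟩ := hex
  have hdet : (1 + S).det = ∏ i, (1 + h.eigenvalues i) := by
    rw [hone, Matrix.det_mul, Matrix.det_mul, mul_comm, ← mul_assoc, ← Matrix.det_mul, hUU',
      Matrix.det_one, one_mul, Matrix.det_diagonal]
  rw [hdet]
  have herase : (1:ℝ) ≤ ∏ i ∈ Finset.univ.erase j, (1 + h.eigenvalues i) := by
    have := Finset.prod_le_prod (s := Finset.univ.erase j)
      (f := fun _ => (1:ℝ)) (g := fun i => 1 + h.eigenvalues i)
      (fun i _ => zero_le_one) (fun i _ => by simpa using hnonneg i)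
    simpa using this
  calc (1:ℝ) < 1 + h.eigenvalues j := by linarith
    _ = (1 + h.eigenvalues j) * 1 := (mul_one _).symm
    _ ≤ (1 + h.eigenvalues j) * ∏ i ∈ Finset.univ.erase j, (1 + h.eigenvalues i) :=
        mul_le_mul_of_nonneg_left herase (by linarith)
    _ = ∏ i, (1 + h.eigenvalues i) :=
        Finset.mul_prod_erase Finset.univ (fun i => 1 + h.eigenvalues i) (Finset.mem_univ j)

open scoped MatrixOrder in
lemma det_lt_det_add_psd {n : Type*} [Fintype n] [DecidableEq n]
    {A R : Matrix n n ℝ} (hA : A.PosDef) (hR : R.PosSemidef) (hne : R ≠ 0) :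
    A.det < (A + R).det := by
  set B := CFC.sqrt A with hBdef
  have hBB : B * B = A := CFC.sqrt_mul_sqrt_self A hA.posSemidef.nonneg
  have hBpsd : B.PosSemidef := (CFC.sqrt_nonneg A).posSemidef
  have hdetB : B.det * B.det = A.det := by rw [← Matrix.det_mul, hBB]
  have hdetBne : B.det ≠ 0 := by
    intro h0
    have := hA.det_pos
    rw [← hdetB, h0, mul_zero] at this
    exact lt_irrefl _ this
  have hBinv : B⁻¹ * B = 1 := Matrix.nonsing_inv_mul B (isUnit_iff_ne_zero.mpr hdetBne)
  have hBinv' : B * B⁻¹ = 1 := Matrix.mul_nonsing_inv B (isUnit_iff_ne_zero.mpr hdetBne)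
  have hBherm : Bᴴ = B := hBpsd.isHermitian
  set S := B⁻¹ * R * B⁻¹ with hSdef
  have hSpsd : S.PosSemidef := by
    have := hR.conjTranspose_mul_mul_same (B := B⁻¹)
    rwa [Matrix.conjTranspose_nonsing_inv, hBherm] at this
  have hSne : S ≠ 0 := by
    intro h0
    apply hne
    have : B * S * B = R := by
      rw [hSdef, Matrix.mul_assoc, Matrix.mul_assoc, hBinv, Matrix.mul_one, ← Matrix.mul_assoc,
        hBinv', Matrix.one_mul]
    rw [← this, h0, Matrix.mul_zero, Matrix.zero_mul]
  have hfact : A + R = B * (1 + S) * B := by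
    rw [Matrix.mul_add, Matrix.mul_one, Matrix.add_mul, hBB, hSdef]
    congr 1
    rw [← Matrix.mul_assoc, ← Matrix.mul_assoc, hBinv', Matrix.one_mul, Matrix.mul_assoc, hBinv,
      Matrix.mul_one]
  have h1 : 1 < (1 + S).det := det_one_add_psd hSpsd hSne
  have hBBpos : 0 < B.det * B.det := hdetB ▸ hA.det_pos
  calc A.det = B.det * B.det * 1 := by rw [mul_one]; exact hdetB.symm
    _ < B.det * B.det * (1 + S).det := mul_lt_mul_of_pos_left h1 hBBpos
    _ = (A + R).det := by rw [hfact, Matrix.det_mul, Matrix.det_mul]; ring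

lemma continuous_quadform {d : ℕ} (Q : Matrix (Fin d) (Fin d) ℝ) :
    Continuous (fun v : Fin d → ℝ => v ⬝ᵥ Q.mulVec v) := by
  simp only [dotProduct, Matrix.mulVec]
  exact continuous_finset_sum _ fun i _ =>
    (continuous_apply i).mul (continuous_finset_sum _ fun j _ =>
      continuous_const.mul (continuous_apply j))

lemma quadform_smul {d : ℕ} (Q : Matrix (Fin d) (Fin d) ℝ) (a : ℝ) (v : Fin d → ℝ) :
    (a • v) ⬝ᵥ Q.mulVec (a • v) = a * (a * (v ⬝ᵥ Q.mulVec v)) := by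
  rw [Matrix.mulVec_smul, smul_dotProduct, dotProduct_smul]
  simp [smul_eq_mul, mul_assoc]

lemma posdef_lower {d : ℕ} (hd : 1 ≤ d) {Q : Matrix (Fin d) (Fin d) ℝ} (hQ : Q.PosDef) :
    ∃ c > 0, ∀ v : Fin d → ℝ, c * ‖v‖ ^ 2 ≤ v ⬝ᵥ Q.mulVec v := by
  have hcont := continuous_quadform Q
  have hcomp : IsCompact (Metric.sphere (0 : Fin d → ℝ) 1) := isCompact_sphere 0 1
  have hne : (Metric.sphere (0 : Fin d → ℝ) 1).Nonempty := by
    refine ⟨Pi.single ⟨0, hd⟩ 1, ?_⟩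
    simp [Pi.norm_single]
  obtain ⟨u, hu, humin⟩ := hcomp.exists_isMinOn hne hcont.continuousOn
  have hunorm : ‖u‖ = 1 := by simpa using hu
  have hune : u ≠ 0 := by
    intro h0; rw [h0] at hunorm; simp at hunorm
  have hc : 0 < u ⬝ᵥ Q.mulVec u := by
    have := hQ.dotProduct_mulVec_pos hune
    simpa using this
  refine ⟨u ⬝ᵥ Q.mulVec u, hc, fun v => ?_⟩
  by_cases hv : v = 0
  · simp [hv, dotProduct, Matrix.mulVec_zero]
  · have hnv : (0:ℝ) < ‖v‖ := norm_pos_iff.mpr hv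
    set w := ‖v‖⁻¹ • v with hw
    have hwsph : w ∈ Metric.sphere (0 : Fin d → ℝ) 1 := by
      simp [hw, norm_smul, abs_of_pos (inv_pos.mpr hnv), inv_mul_cancel₀ (ne_of_gt hnv)]
    have hle : u ⬝ᵥ Q.mulVec u ≤ w ⬝ᵥ Q.mulVec w := humin hwsph
    have hweq : w ⬝ᵥ Q.mulVec w = ‖v‖⁻¹ * (‖v‖⁻¹ * (v ⬝ᵥ Q.mulVec v)) := quadform_smul Q _ v
    rw [hweq] at hle
    have h2 : (u ⬝ᵥ Q.mulVec u) * ‖v‖ ^ 2 ≤ v ⬝ᵥ Q.mulVec v := by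
      rw [← mul_le_mul_iff_left₀ (mul_pos (mul_pos hnv hnv) (by norm_num : (0:ℝ) < 1))] at hle
      field_simp at hle ⊢
      nlinarith [hle]
    exact h2

lemma quadform_abs_le {d : ℕ} (S : Matrix (Fin d) (Fin d) ℝ) (v : Fin d → ℝ) :
    |v ⬝ᵥ S.mulVec v| ≤ (∑ i, ∑ j, |S i j|) * ‖v‖ ^ 2 := by
  have hvi : ∀ i, |v i| ≤ ‖v‖ := fun i => by simpa using norm_le_pi_norm v i
  have hvnn : (0:ℝ) ≤ ‖v‖ := norm_nonneg v
  calc |v ⬝ᵥ S.mulVec v| = |∑ i, v i * ∑ j, S i j * v j| := by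
        simp [dotProduct, Matrix.mulVec]
    _ ≤ ∑ i, |v i * ∑ j, S i j * v j| := Finset.abs_sum_le_sum_abs _ _
    _ ≤ ∑ i, ‖v‖ * ∑ j, |S i j| * ‖v‖ := by
        apply Finset.sum_le_sum
        intro i _
        rw [abs_mul]
        apply mul_le_mul (hvi i) ?_ (abs_nonneg _) hvnn
        calc |∑ j, S i j * v j| ≤ ∑ j, |S i j * v j| := Finset.abs_sum_le_sum_abs _ _
          _ ≤ ∑ j, |S i j| * ‖v‖ := by
              apply Finset.sum_le_sum
              intro j _
              rw [abs_mul]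
              exact mul_le_mul_of_nonneg_left (hvi j) (abs_nonneg _)
    _ = (∑ i, ∑ j, |S i j|) * ‖v‖ ^ 2 := by
        rw [Finset.sum_mul]
        apply Finset.sum_congr rfl
        intro i _
        rw [Finset.sum_mul]
        rw [Finset.mul_sum]
        apply Finset.sum_congr rfl
        intro j _
        ring

lemma quadform_dominated {d : ℕ} (hd : 1 ≤ d) {Q : Matrix (Fin d) (Fin d) ℝ} (hQ : Q.PosDef)
    (S : Matrix (Fin d) (Fin d) ℝ) :
    ∃ C > 0, ∀ v : Fin d → ℝ, |v ⬝ᵥ S.mulVec v| ≤ C * (v ⬝ᵥ Q.mulVec v) := by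
  obtain ⟨c, hc, hlow⟩ := posdef_lower hd hQ
  set K := ∑ i, ∑ j, |S i j| with hK
  have hKnn : 0 ≤ K := Finset.sum_nonneg fun i _ => Finset.sum_nonneg fun j _ => abs_nonneg _
  refine ⟨(K + 1) / c, by positivity, fun v => ?_⟩
  have h1 := quadform_abs_le S v
  have h2 := hlow v
  calc |v ⬝ᵥ S.mulVec v| ≤ K * ‖v‖ ^ 2 := h1
    _ ≤ (K + 1) / c * (c * ‖v‖ ^ 2) := by
        rw [div_mul_eq_mul_div, mul_comm c, ← mul_assoc, mul_div_assoc, div_self (ne_of_gt hc),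
          mul_one]
        nlinarith [sq_nonneg ‖v‖]
    _ ≤ (K + 1) / c * (v ⬝ᵥ Q.mulVec v) := by
        apply mul_le_mul_of_nonneg_left h2 (by positivity)

lemma isHermitian_of_isSymm' {d : ℕ} {A : Matrix (Fin d) (Fin d) ℝ} (h : A.IsSymm) :
    A.IsHermitian := by
  show Aᴴ = A
  rw [Matrix.conjTranspose_eq_transpose_of_trivial]
  exact h

lemma posdef_add_of_lt' {d : ℕ} {Q E : Matrix (Fin d) (Fin d) ℝ} (hQ : Q.PosDef)
    (hE : E.IsHermitian)
    (h : ∀ v : Fin d → ℝ, v ≠ 0 → |v ⬝ᵥ E.mulVec v| < v ⬝ᵥ Q.mulVec v) :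
    (Q + E).PosDef := by
  refine Matrix.PosDef.of_dotProduct_mulVec_pos (hQ.1.add hE) fun ⦃v⦄ hv => ?_
  have h1 := hQ.dotProduct_mulVec_pos hv
  have h2 := h v hv
  have hst : star v = v := by simp
  rw [hst] at h1 ⊢
  rw [Matrix.add_mulVec, dotProduct_add]
  have := abs_lt.mp h2
  linarith [this.1]

lemma key_identity' {d : ℕ} (Q T : Matrix (Fin d) (Fin d) ℝ) (hQdet : IsUnit Q.det) (t : ℝ) :
    (Q + t • T) * Q⁻¹ * (Q - t • T) = Q - (t * t) • (T * Q⁻¹ * T) := by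
  have h1 : Q * Q⁻¹ = 1 := Matrix.mul_nonsing_inv Q hQdet
  have h2 : Q⁻¹ * Q = 1 := Matrix.nonsing_inv_mul Q hQdet
  rw [Matrix.add_mul, Matrix.smul_mul, h1, Matrix.add_mul, Matrix.one_mul, Matrix.smul_mul,
    Matrix.mul_sub]
  rw [Matrix.mul_assoc T Q⁻¹ Q, h2, Matrix.mul_one, Matrix.mul_smul, smul_sub, smul_smul]
  abel



lemma qeval_add {d : ℕ} (A B : Matrix (Fin d) (Fin d) ℝ) (x : Fin d → ℤ) :
    qeval (A + B) x = qeval A x + qeval B x := by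
  simp [qeval, Matrix.add_mulVec, dotProduct_add]

lemma qeval_sub {d : ℕ} (A B : Matrix (Fin d) (Fin d) ℝ) (x : Fin d → ℤ) :
    qeval (A - B) x = qeval A x - qeval B x := by
  simp [qeval, Matrix.sub_mulVec, dotProduct_sub]

lemma qeval_smul {d : ℕ} (t : ℝ) (A : Matrix (Fin d) (Fin d) ℝ) (x : Fin d → ℤ) :
    qeval (t • A) x = t * qeval A x := by
  simp [qeval, Matrix.smul_mulVec, dotProduct_smul]

lemma rquad_add {d : ℕ} (A B : Matrix (Fin d) (Fin d) ℝ) (v : Fin d → ℝ) :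
    v ⬝ᵥ (A + B).mulVec v = v ⬝ᵥ A.mulVec v + v ⬝ᵥ B.mulVec v := by
  simp [Matrix.add_mulVec, dotProduct_add]

lemma rquad_sub {d : ℕ} (A B : Matrix (Fin d) (Fin d) ℝ) (v : Fin d → ℝ) :
    v ⬝ᵥ (A - B).mulVec v = v ⬝ᵥ A.mulVec v - v ⬝ᵥ B.mulVec v := by
  simp [Matrix.sub_mulVec, dotProduct_sub]

lemma rquad_smul {d : ℕ} (t : ℝ) (A : Matrix (Fin d) (Fin d) ℝ) (v : Fin d → ℝ) :
    v ⬝ᵥ (t • A).mulVec v = t * (v ⬝ᵥ A.mulVec v) := by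
  simp [Matrix.smul_mulVec, dotProduct_smul]

lemma castVec_ne_zero {d : ℕ} {x : Fin d → ℤ} (hx : x ≠ 0) : castVec x ≠ 0 := by
  obtain ⟨i, hi⟩ := Function.ne_iff.mp hx
  intro h0
  apply hi
  have := congrFun h0 i
  simpa [castVec] using this

lemma finite_sublevel {d : ℕ} {Q : Matrix (Fin d) (Fin d) ℝ} {c : ℝ} (hc : 0 < c)
    (hlow : ∀ v : Fin d → ℝ, c * ‖v‖ ^ 2 ≤ v ⬝ᵥ Q.mulVec v) (B : ℝ) :
    {x : Fin d → ℤ | qeval Q x ≤ B}.Finite := by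
  set b : ℝ := max (B / c) 1 with hb
  have hb1 : (1:ℝ) ≤ b := le_max_right _ _
  set m : ℤ := ⌈b⌉ with hm
  apply Set.Finite.subset (Set.finite_Icc (fun _ : Fin d => -m) (fun _ => m))
  intro x hx
  simp only [Set.mem_setOf_eq] at hx
  have key : ∀ i, |x i| ≤ m := by
    intro i
    have h1 : c * ‖castVec x‖ ^ 2 ≤ B := le_trans (hlow (castVec x)) hx
    have h2 : ‖castVec x‖ ^ 2 ≤ B / c := by
      rw [le_div_iff₀ hc]; linarith [h1]
    have h3 : ‖castVec x‖ ^ 2 ≤ b := le_trans h2 (le_max_left _ _)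
    have h4 : |(x i : ℝ)| ≤ ‖castVec x‖ := by
      simpa [castVec] using norm_le_pi_norm (castVec x) i
    have h5 : |(x i : ℝ)| ≤ b := by
      rcases le_or_gt ‖castVec x‖ 1 with h | h
      · linarith [h4]
      · nlinarith [norm_nonneg (castVec x)]
    have h6 : (|x i| : ℝ) ≤ (m : ℝ) := by
      -- cast
      exact le_trans h5 (Int.le_ceil b)
    exact_mod_cast h6
  constructor
  · intro i
    simp only
    linarith [key i, neg_abs_le (x i), abs_le.mp (key i)]
  · intro i
    simp only
    linarith [(abs_le.mp (key i)).2]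

set_option maxHeartbeats 2000000 in
/-- Every positive definite quadratic form attaining Hermite's constant, i.e.
maximizing the Hermite invariant `λ(Q)/(det Q)^(1/d)` among all positive
definite forms, is perfect. -/
theorem stmt14 (d : ℕ) (hd : 1 ≤ d) (Q : Matrix (Fin d) (Fin d) ℝ) (lam : ℝ)
    (hQ : Q.PosDef)
    (hlam : IsLeast {r : ℝ | ∃ x : Fin d → ℤ, x ≠ 0 ∧ qeval Q x = r} lam)
    (hmax : ∀ (Q' : Matrix (Fin d) (Fin d) ℝ) (lam' : ℝ), Q'.PosDef →
      IsLeast {r : ℝ | ∃ x : Fin d → ℤ, x ≠ 0 ∧ qeval Q' x = r} lam' →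
      lam' / Q'.det ^ ((1 : ℝ) / d) ≤ lam / Q.det ^ ((1 : ℝ) / d)) :
    IsPerfect Q lam := by
  classical
  refine ⟨hQ, hlam, ?_⟩
  intro Q' hsym hagree
  by_contra hne
  -- the perturbation direction
  set T : Matrix (Fin d) (Fin d) ℝ := Q' - Q with hTdef
  have hTne : T ≠ 0 := sub_ne_zero_of_ne hne
  have hQsymm : Q.IsSymm := by
    have h := hQ.isHermitian
    rwa [Matrix.IsHermitian, Matrix.conjTranspose_eq_transpose_of_trivial] at h
  have hTsym : T.IsSymm := hsym.sub hQsymm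
  have hTherm : T.IsHermitian := isHermitian_of_isSymm' hTsym
  have hTzero : ∀ x : Fin d → ℤ, qeval Q x = lam → qeval T x = 0 := by
    intro x hx
    rw [hTdef, qeval_sub, hagree x hx, hx, sub_self]
  -- positivity of the minimum
  obtain ⟨x₁, hx₁ne, hx₁⟩ := hlam.1
  have hlampos : 0 < lam := by
    rw [← hx₁]
    have h := hQ.dotProduct_mulVec_pos (castVec_ne_zero hx₁ne)
    simpa [qeval] using h
  -- constants
  obtain ⟨c, hc, hlow⟩ := posdef_lower hd hQ
  obtain ⟨C₁, hC₁, hbT⟩ := quadform_dominated hd hQ T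
  have hQdetunit : IsUnit Q.det := isUnit_iff_ne_zero.mpr (ne_of_gt hQ.det_pos)
  set S₂ : Matrix (Fin d) (Fin d) ℝ := T * Q⁻¹ * T with hS₂def
  obtain ⟨C₂, hC₂, hbS₂⟩ := quadform_dominated hd hQ S₂
  -- the spectral gap δ above the minimum
  have hgap : ∃ δ : ℝ, 0 < δ ∧ δ ≤ 1 ∧
      ∀ x : Fin d → ℤ, x ≠ 0 → qeval Q x ≠ lam → lam + δ ≤ qeval Q x := by
    set Sg := {x : Fin d → ℤ | x ≠ 0 ∧ qeval Q x ≠ lam ∧ qeval Q x ≤ lam + 1} with hSg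
    have hSfin : Sg.Finite := (finite_sublevel hc hlow (lam + 1)).subset fun x hx => hx.2.2
    by_cases hne' : Sg.Nonempty
    · have hFne : hSfin.toFinset.Nonempty := Set.Finite.toFinset_nonempty hSfin |>.mpr hne'
      set δ₁ := hSfin.toFinset.inf' hFne (fun x => qeval Q x - lam) with hδ₁
      refine ⟨min δ₁ 1, ?_, min_le_right _ _, ?_⟩
      · refine lt_min ?_ one_pos
        rw [hδ₁, Finset.lt_inf'_iff]
        intro x hxF
        have hx := hSfin.mem_toFinset.mp hxF
        have hge : lam ≤ qeval Q x := hlam.2 ⟨x, hx.1, rfl⟩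
        have hlt : lam < qeval Q x := lt_of_le_of_ne hge (Ne.symm hx.2.1)
        simpa using hlt
      · intro x hx0 hxne
        by_cases hxB : qeval Q x ≤ lam + 1
        · have hxF : x ∈ hSfin.toFinset := hSfin.mem_toFinset.mpr ⟨hx0, hxne, hxB⟩
          have h1 := Finset.inf'_le (fun x => qeval Q x - lam) hxF
          have h2 : min δ₁ 1 ≤ δ₁ := min_le_left _ _
          linarith
        · push_neg at hxB
          have : min δ₁ 1 ≤ 1 := min_le_right _ _
          linarith
    · refine ⟨1, one_pos, le_refl 1, fun x hx0 hxne => ?_⟩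
      by_contra hlt
      push_neg at hlt
      exact hne' ⟨x, hx0, hxne, by linarith⟩
  obtain ⟨δ, hδpos, hδ1, hδ⟩ := hgap
  -- choose the size of the perturbation
  set t : ℝ := min 1 (min (δ / ((lam + δ) * C₁)) (min (1 / (2 * C₁)) (1 / (2 * C₂)))) with htdef
  have htpos : 0 < t := by
    refine lt_min one_pos (lt_min (by positivity) (lt_min (by positivity) (by positivity)))
  have ht1 : t ≤ 1 := min_le_left _ _
  have htδ : t ≤ δ / ((lam + δ) * C₁) := le_trans (min_le_right _ _) (min_le_left _ _)
  have htC₁ : t ≤ 1 / (2 * C₁) :=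
    le_trans (min_le_right _ _) (le_trans (min_le_right _ _) (min_le_left _ _))
  have htC₂ : t ≤ 1 / (2 * C₂) :=
    le_trans (min_le_right _ _) (le_trans (min_le_right _ _) (min_le_right _ _))
  have htC₁half : t * C₁ ≤ 1 / 2 := by
    rw [le_div_iff₀ (by positivity)] at htC₁
    linarith
  have htC₂half : t * t * C₂ ≤ 1 / 2 := by
    rw [le_div_iff₀ (by positivity)] at htC₂
    nlinarith
  have htgap : t * C₁ ≤ δ / (lam + δ) := by
    rw [le_div_iff₀ (by positivity)] at htδ ⊢
    calc t * C₁ * (lam + δ) = t * ((lam + δ) * C₁) := by ring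
      _ ≤ δ := htδ
  -- both perturbed forms are positive definite
  have hPD : ∀ s : ℝ, |s| ≤ t → (Q + s • T).PosDef := by
    intro s hs
    apply posdef_add_of_lt' hQ (isHermitian_of_isSymm' (by rw [Matrix.IsSymm, Matrix.transpose_smul, hTsym.eq]))
    intro v hv
    have h1 := hQ.dotProduct_mulVec_pos hv
    have hst : star v = v := by simp
    rw [hst] at h1
    have h2 := hbT v
    rw [rquad_smul, abs_mul]
    have habs : |s| * |v ⬝ᵥ T.mulVec v| ≤ t * (C₁ * (v ⬝ᵥ Q.mulVec v)) := by
      apply mul_le_mul hs h2 (abs_nonneg _) (le_of_lt htpos)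
    nlinarith
  -- both perturbed forms have the same arithmetical minimum lam
  have hmin : ∀ s : ℝ, |s| ≤ t →
      IsLeast {r : ℝ | ∃ x : Fin d → ℤ, x ≠ 0 ∧ qeval (Q + s • T) x = r} lam := by
    intro s hs
    constructor
    · exact ⟨x₁, hx₁ne, by rw [qeval_add, qeval_smul, hx₁, hTzero x₁ hx₁, mul_zero, add_zero]⟩
    · rintro r ⟨x, hx0, rfl⟩
      rw [qeval_add, qeval_smul]
      by_cases hxlam : qeval Q x = lam
      · rw [hxlam, hTzero x hxlam, mul_zero, add_zero]
      · have hge : lam + δ ≤ qeval Q x := hδ x hx0 hxlam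
        have hb : |qeval T x| ≤ C₁ * qeval Q x := hbT (castVec x)
        have h1 : |s * qeval T x| ≤ t * C₁ * qeval Q x := by
          rw [abs_mul]
          calc |s| * |qeval T x| ≤ t * (C₁ * qeval Q x) :=
            mul_le_mul hs hb (abs_nonneg _) (le_of_lt htpos)
            _ = t * C₁ * qeval Q x := by ring
        have h2 : s * qeval T x ≥ -(t * C₁ * qeval Q x) := by
          have := abs_le.mp h1
          linarith [this.1]
        have hq : t * C₁ * qeval Q x ≤ qeval Q x - lam := by
          have hδq : t * C₁ * (lam + δ) ≤ δ := by
            rw [le_div_iff₀ (by positivity)] at htgap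
            linarith
          have hfac : (qeval Q x - (lam + δ)) * (1 - t * C₁) ≥ 0 := by
            apply mul_nonneg (by linarith)
            nlinarith
          nlinarith
        linarith
  -- determinant comparison
  set A : Matrix (Fin d) (Fin d) ℝ := Q - (t * t) • S₂ with hAdef
  have hid : (Q + t • T) * Q⁻¹ * (Q - t • T) = A := key_identity' Q T hQdetunit t
  have hQinvsym : (Q⁻¹).IsSymm := by
    rw [Matrix.IsSymm, Matrix.transpose_nonsing_inv, hQsymm.eq]
  have hS₂sym : S₂.IsSymm := by
    rw [Matrix.IsSymm, hS₂def, Matrix.transpose_mul, Matrix.transpose_mul, hTsym.eq,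
      hQinvsym.eq, ← Matrix.mul_assoc]
  have hS₂psd : S₂.PosSemidef := by
    have h := hQ.inv.posSemidef.conjTranspose_mul_mul_same (B := T)
    rwa [show Tᴴ = T from hTherm, ← hS₂def] at h
  have hS₂ne : S₂ ≠ 0 := by
    intro h0
    obtain ⟨i, j, hij⟩ : ∃ i j, T i j ≠ 0 := by
      by_contra hcon
      push_neg at hcon
      exact hTne (Matrix.ext fun i j => hcon i j)
    have hwne : T.mulVec (Pi.single j 1) ≠ 0 := by
      intro hw
      apply hij
      have := congrFun hw i
      simpa using this
    have hpos := hQ.inv.dotProduct_mulVec_pos hwne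
    have hst : star (T.mulVec (Pi.single j 1)) = T.mulVec (Pi.single j 1) := by simp
    rw [hst] at hpos
    have hvm : (Pi.single j 1 : Fin d → ℝ) ᵥ* T = T.mulVec (Pi.single j 1) := by
      conv_lhs => rw [← hTsym.eq]
      rw [Matrix.vecMul_transpose]
    have hcalc : (Pi.single j 1 : Fin d → ℝ) ⬝ᵥ S₂.mulVec (Pi.single j 1) =
        T.mulVec (Pi.single j 1) ⬝ᵥ Q⁻¹.mulVec (T.mulVec (Pi.single j 1)) := by
      rw [hS₂def, ← Matrix.mulVec_mulVec, ← Matrix.mulVec_mulVec, Matrix.dotProduct_mulVec, hvm]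
    rw [h0] at hcalc
    simp only [Matrix.zero_mulVec, dotProduct_zero] at hcalc
    rw [← hcalc] at hpos
    exact lt_irrefl _ hpos
  have hApd : A.PosDef := by
    rw [hAdef, sub_eq_add_neg]
    apply posdef_add_of_lt' hQ
    · apply isHermitian_of_isSymm'
      rw [Matrix.IsSymm, Matrix.transpose_neg, Matrix.transpose_smul, hS₂sym.eq]
    · intro v hv
      have h1 := hQ.dotProduct_mulVec_pos hv
      have hst : star v = v := by simp
      rw [hst] at h1
      have h2 := hbS₂ v
      have hneg : v ⬝ᵥ (-((t * t) • S₂)).mulVec v = -((t * t) * (v ⬝ᵥ S₂.mulVec v)) := by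
        rw [Matrix.neg_mulVec, dotProduct_neg, rquad_smul]
      rw [hneg, abs_neg, abs_mul]
      have : |t * t| * |v ⬝ᵥ S₂.mulVec v| ≤ (t * t) * (C₂ * (v ⬝ᵥ Q.mulVec v)) := by
        rw [abs_of_pos (by positivity : (0:ℝ) < t * t)]
        exact mul_le_mul_of_nonneg_left h2 (by positivity)
      nlinarith
  have hRpsd : ((t * t) • S₂).PosSemidef := by
    refine Matrix.PosSemidef.of_dotProduct_mulVec_nonneg ?_ ?_
    · apply isHermitian_of_isSymm'
      rw [Matrix.IsSymm, Matrix.transpose_smul, hS₂sym.eq]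
    · intro v
      have h := hS₂psd.dotProduct_mulVec_nonneg v
      have hst : star v = v := by simp
      rw [hst] at h ⊢
      rw [rquad_smul]
      exact mul_nonneg (mul_self_nonneg t) h
  have hRne : (t * t) • S₂ ≠ 0 := smul_ne_zero (by positivity) hS₂ne
  have hAQ : A + (t * t) • S₂ = Q := by rw [hAdef]; abel
  have hAltQ : A.det < Q.det := by
    have h := det_lt_det_add_psd hApd hRpsd hRne
    rwa [hAQ] at h
  have hdetid : (Q + t • T).det * (Q - t • T).det = Q.det * A.det := by
    have h := congrArg Matrix.det hid
    rw [Matrix.det_mul, Matrix.det_mul, Matrix.det_nonsing_inv, Ring.inverse_eq_inv] at h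
    field_simp at h
    rw [div_eq_iff (ne_of_gt hQ.det_pos)] at h
    linear_combination h
  -- one of the two perturbed forms has strictly smaller determinant
  have hdetp : 0 < (Q + t • T).det := (hPD t (by rw [abs_of_pos htpos])).det_pos
  have hsub : Q - t • T = Q + (-t) • T := by rw [neg_smul, sub_eq_add_neg]
  have hdetm : 0 < (Q - t • T).det := by
    rw [hsub]
    exact (hPD (-t) (by rw [abs_neg, abs_of_pos htpos])).det_pos
  have hone : (Q + t • T).det < Q.det ∨ (Q - t • T).det < Q.det := by
    by_contra hcon
    push_neg at hcon
    nlinarith [hcon.1, hcon.2, hQ.det_pos, hAltQ, hdetid]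
  -- derive the contradiction with maximality
  have hcontr : ∀ s : ℝ, |s| ≤ t → (Q + s • T).det < Q.det → False := by
    intro s hs hlt
    have hmax' := hmax (Q + s • T) lam (hPD s hs) (hmin s hs)
    have hdpos : (0:ℝ) < (Q + s • T).det := (hPD s hs).det_pos
    have he : (0:ℝ) < (1 : ℝ) / d := by
      have : (0:ℝ) < (d:ℝ) := by exact_mod_cast Nat.pos_of_ne_zero (by omega)
      positivity
    have h1 : (Q + s • T).det ^ ((1:ℝ)/d) < Q.det ^ ((1:ℝ)/d) :=
      Real.rpow_lt_rpow (le_of_lt hdpos) hlt he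
    have h2 : lam / Q.det ^ ((1:ℝ)/d) < lam / (Q + s • T).det ^ ((1:ℝ)/d) :=
      div_lt_div_of_pos_left hlampos (Real.rpow_pos_of_pos hdpos _) h1
    linarith
  rcases hone with h | h
  · exact hcontr t (by rw [abs_of_pos htpos]) h
  · rw [hsub] at h
    exact hcontr (-t) (by rw [abs_neg, abs_of_pos htpos]) h
end

section
/- (Hermite reduction) For every positive definite quadratic form Q in d variables there exists U ∈ GL_d(ℤ) such that the equivalent form Q' = UᵗQU satisfies ∏_{i=1}^d q'_{ii} ≤ (4/3)^{d(d−1)/2} · det Q', where q'_{ii} are the diagonal entries of Q'. -/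
open Matrix

/-- The real matrix corresponding to an integral matrix. -/
def castMat {d : ℕ} (U : Matrix (Fin d) (Fin d) ℤ) : Matrix (Fin d) (Fin d) ℝ :=
  U.map fun z => (z : ℝ)

namespace H18

/-! ### Quadratic value basics -/

def qv {d : ℕ} (M : Matrix (Fin d) (Fin d) ℝ) (x : Fin d → ℝ) : ℝ := x ⬝ᵥ (M *ᵥ x)

lemma qv_eq_sum {d : ℕ} (M : Matrix (Fin d) (Fin d) ℝ) (x : Fin d → ℝ) :
    qv M x = ∑ i, ∑ j, x i * (M i j * x j) := by
  simp [qv, dotProduct, mulVec, Finset.mul_sum]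

lemma qv_pos {d : ℕ} {M : Matrix (Fin d) (Fin d) ℝ} (hM : M.PosDef)
    {x : Fin d → ℝ} (hx : x ≠ 0) : 0 < qv M x := by
  simpa [qv] using hM.dotProduct_mulVec_pos hx

def cv {d : ℕ} (x : Fin d → ℤ) : Fin d → ℝ := fun i => (x i : ℝ)

lemma cv_eq_zero {d : ℕ} {x : Fin d → ℤ} : cv x = 0 ↔ x = 0 := by
  constructor
  · intro h; funext i; have := congrFun h i; simpa [cv] using this
  · rintro rfl; funext i; simp [cv]

lemma diag_congr {d : ℕ} (M P : Matrix (Fin d) (Fin d) ℝ) (i : Fin d) :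
    (Pᵀ * M * P) i i = qv M (fun k => P k i) := by
  simp [qv, mul_apply, dotProduct, mulVec, Finset.mul_sum, Finset.sum_mul, transpose_apply]
  rw [Finset.sum_comm]
  exact Finset.sum_congr rfl fun k _ => Finset.sum_congr rfl fun j _ => by ring

lemma qv_conj {d : ℕ} (M P : Matrix (Fin d) (Fin d) ℝ) (x : Fin d → ℝ) :
    qv (Pᵀ * M * P) x = qv M (P *ᵥ x) := by
  rw [qv, qv, ← mulVec_mulVec, ← mulVec_mulVec, dotProduct_mulVec, vecMul_transpose]

lemma diag_pos {d : ℕ} {M : Matrix (Fin d) (Fin d) ℝ} (hM : M.PosDef) (i : Fin d) :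
    0 < M i i := by
  have h := hM.dotProduct_mulVec_pos (x := Pi.single i 1) (by
    intro h; have := congrFun h i; simp [Pi.single_apply] at this)
  simpa [dotProduct, mulVec, Pi.single_apply, mul_ite, ite_mul,
    Finset.sum_ite_eq, Finset.sum_ite_eq'] using h

lemma transpose_eq_of_posDef {d : ℕ} {M : Matrix (Fin d) (Fin d) ℝ} (hM : M.PosDef) :
    Mᵀ = M := by
  ext i j
  have h := congrFun (congrFun hM.1 i) j
  simpa [conjTranspose_apply] using h

lemma cons_ne_zero {d : ℕ} (t : ℝ) {y : Fin d → ℝ} (hy : y ≠ 0) :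
    (Fin.cons t y : Fin (d+1) → ℝ) ≠ 0 := by
  intro h
  apply hy
  funext i
  have := congrFun h i.succ
  simpa using this

lemma mulVec_ne_zero {d : ℕ} {P : Matrix (Fin d) (Fin d) ℝ} (hP : P.det ≠ 0)
    {x : Fin d → ℝ} (hx : x ≠ 0) : P *ᵥ x ≠ 0 := by
  intro h
  apply hx
  have h1 : P⁻¹ *ᵥ (P *ᵥ x) = x := by
    rw [mulVec_mulVec, nonsing_inv_mul P (isUnit_iff_ne_zero.2 hP), one_mulVec]
  rw [← h1, h, mulVec_zero]

lemma posDef_conj {d : ℕ} {Q : Matrix (Fin d) (Fin d) ℝ} (hQ : Q.PosDef)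
    {P : Matrix (Fin d) (Fin d) ℝ} (hP : P.det ≠ 0) : (Pᵀ * Q * P).PosDef := by
  refine Matrix.PosDef.of_dotProduct_mulVec_pos ?_ ?_
  · have h : (Pᵀ * Q * P)ᵀ = Pᵀ * Q * P := by
      rw [Matrix.transpose_mul, Matrix.transpose_mul, transpose_transpose,
        transpose_eq_of_posDef hQ, Matrix.mul_assoc]
    ext i j
    simp only [conjTranspose_apply, star_trivial]
    have h2 := congrFun (congrFun h i) j
    rw [transpose_apply] at h2
    exact h2
  · intro x hx
    have h := qv_pos hQ (mulVec_ne_zero hP hx)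
    rw [← qv_conj] at h
    simpa [qv] using h

/-! ### Coercivity and existence of a minimal vector -/

open scoped MatrixOrder

lemma coercive {d : ℕ} (Q : Matrix (Fin d) (Fin d) ℝ) (hQ : Q.PosDef) :
    ∃ K : ℝ, 0 ≤ K ∧ ∀ (x : Fin d → ℝ) (i : Fin d), (x i)^2 ≤ K * qv Q x := by
  classical
  set B := CFC.sqrt Q with hB
  have hBB : B * B = Q := CFC.sqrt_mul_sqrt_self Q hQ.posSemidef.nonneg
  have hBH : Bᴴ = B := (CFC.sqrt_nonneg Q).posSemidef.isHermitian
  have hBT : Bᵀ = B := by simpa using hBH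
  have hdet : B.det ≠ 0 := by
    intro h
    have : Q.det = 0 := by rw [← hBB, det_mul, h, mul_zero]
    exact (hQ.det_pos.ne' this)
  have hinv : B⁻¹ * B = 1 := nonsing_inv_mul B (isUnit_iff_ne_zero.2 hdet)
  refine ⟨∑ i, ∑ j, (B⁻¹ i j)^2, by positivity, fun x i => ?_⟩
  set z := B *ᵥ x with hz
  have hx : x = B⁻¹ *ᵥ z := by
    rw [hz, mulVec_mulVec, hinv, one_mulVec]
  have hqv : qv Q x = ∑ j, (z j)^2 := by
    rw [qv, ← hBB, ← mulVec_mulVec, ← hz]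
    have h3 : x ⬝ᵥ (B *ᵥ z) = (x ᵥ* B) ⬝ᵥ z := dotProduct_mulVec x B z
    rw [h3]
    have h2 : x ᵥ* B = B *ᵥ x := by
      calc x ᵥ* B = x ᵥ* Bᵀᵀ := by rw [transpose_transpose]
        _ = Bᵀ *ᵥ x := vecMul_transpose _ _
        _ = B *ᵥ x := by rw [hBT]
    rw [h2, ← hz, dotProduct]
    exact Finset.sum_congr rfl fun j _ => by ring
  have hxi : x i = ∑ j, B⁻¹ i j * z j := by rw [hx]; rfl
  have hcs : (x i)^2 ≤ (∑ j, (B⁻¹ i j)^2) * (∑ j, (z j)^2) := by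
    rw [hxi]
    exact Finset.sum_mul_sq_le_sq_mul_sq Finset.univ _ _
  rw [hqv]
  refine le_trans hcs ?_
  apply mul_le_mul_of_nonneg_right _ (by positivity)
  exact Finset.single_le_sum (f := fun i => ∑ j, (B⁻¹ i j)^2) (fun i _ => by positivity)
    (Finset.mem_univ i)

lemma exists_min {n : ℕ} (Q : Matrix (Fin (n+1)) (Fin (n+1)) ℝ) (hQ : Q.PosDef) :
    ∃ v : Fin (n+1) → ℤ, v ≠ 0 ∧ ∀ x : Fin (n+1) → ℤ, x ≠ 0 →
      qv Q (cv v) ≤ qv Q (cv x) := by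
  classical
  obtain ⟨K, hK0, hK⟩ := coercive Q hQ
  set v₀ : Fin (n+1) → ℤ := fun i => if i = 0 then 1 else 0 with hv₀
  have hv₀ne : v₀ ≠ 0 := by
    intro h; have := congrFun h 0; simp [hv₀] at this
  set c := qv Q (cv v₀) with hc
  set S : Set (Fin (n+1) → ℤ) := {x | x ≠ 0 ∧ qv Q (cv x) ≤ c} with hS
  set N : ℤ := ⌈K * c⌉ with hN
  have hfin : S.Finite := by
    apply Set.Finite.subset (Set.Finite.pi (fun i : Fin (n+1) => (Finset.Icc (-N) N).finite_toSet))
    intro x hx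
    intro i _
    simp only [Finset.coe_Icc, Set.mem_Icc]
    have h1 : ((x i : ℝ))^2 ≤ K * qv Q (cv x) := hK (cv x) i
    have h2 : K * qv Q (cv x) ≤ K * c := by
      apply mul_le_mul_of_nonneg_left hx.2 hK0
    have habs : (|x i| : ℝ) ≤ K * c := by
      calc (|x i| : ℝ) = |(x i : ℝ)| := by ring
        _ ≤ ((x i : ℝ))^2 := by
            have hint : |x i| ≤ (x i)^2 := by
              rcases eq_or_ne (x i) 0 with h | h
              · simp [h]
              · have h1 : 1 ≤ |x i| := Int.one_le_abs h
                nlinarith [sq_abs (x i)]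
            exact_mod_cast hint
        _ ≤ K * c := le_trans h1 h2
    have h4 : (|x i| : ℝ) ≤ (N : ℝ) := le_trans habs (Int.le_ceil _)
    have h5 : |x i| ≤ N := by exact_mod_cast h4
    constructor <;> [linarith [neg_abs_le (x i)]; linarith [le_abs_self (x i)]]
  have hne : S.Nonempty := ⟨v₀, hv₀ne, le_refl _⟩
  obtain ⟨v, hvS, hvmin⟩ := Set.exists_min_image S (fun x => qv Q (cv x)) hfin hne
  refine ⟨v, hvS.1, fun x hx => ?_⟩
  by_cases hxS : x ∈ S
  · exact hvmin x hxS
  · have h6 : ¬ qv Q (cv x) ≤ c := fun h => hxS ⟨hx, h⟩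
    have := hvS.2
    linarith [not_le.1 h6]

/-! ### Completing a primitive vector to a unimodular matrix -/

lemma exists_unimodular_col {n : ℕ} (v : Fin (n+1) → ℤ) (hv : v ≠ 0)
    (hprim : Finset.gcd Finset.univ v = 1) :
    ∃ U₀ : Matrix (Fin (n+1)) (Fin (n+1)) ℤ, (U₀.det = 1 ∨ U₀.det = -1) ∧
      ∀ i, U₀ i 0 = v i := by
  classical
  set N : Submodule ℤ (Fin (n+1) → ℤ) := Submodule.span ℤ {v} with hN
  haveI : NoZeroSMulDivisors ℤ ((Fin (n+1) → ℤ) ⧸ N) := by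
    constructor
    intro c x h
    by_cases hc : c = 0
    · exact Or.inl hc
    right
    obtain ⟨y, rfl⟩ := Submodule.Quotient.mk_surjective N x
    rw [← Submodule.Quotient.mk_smul, Submodule.Quotient.mk_eq_zero] at h
    obtain ⟨m, hm⟩ := Submodule.mem_span_singleton.1 h
    have hdvd : c ∣ m := by
      have h1 : c ∣ Finset.gcd Finset.univ (fun i => m * v i) := by
        apply Finset.dvd_gcd
        intro i _
        refine ⟨y i, ?_⟩
        have := congrFun hm i
        simp only [Pi.smul_apply, smul_eq_mul] at this
        linarith [this]
      rw [Finset.gcd_mul_left, hprim, mul_one] at h1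
      exact dvd_normalize_iff.1 h1
    obtain ⟨t, rfl⟩ := hdvd
    have hy : y = t • v := by
      funext i
      have h7 := congrFun hm i
      simp only [Pi.smul_apply, smul_eq_mul] at h7 ⊢
      have h8 : c * y i = c * (t * v i) := by linarith [h7]
      exact mul_left_cancel₀ hc h8
    rw [Submodule.Quotient.mk_eq_zero]
    exact hy ▸ Submodule.smul_mem _ t (Submodule.mem_span_singleton_self v)
  haveI : Module.Finite ℤ ((Fin (n+1) → ℤ) ⧸ N) := Module.Finite.quotient ℤ N
  haveI : Module.Free ℤ ((Fin (n+1) → ℤ) ⧸ N) := Module.free_of_finite_type_torsion_free'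
  set J := Module.Free.ChooseBasisIndex ℤ ((Fin (n+1) → ℤ) ⧸ N)
  set cb : Module.Basis J ℤ ((Fin (n+1) → ℤ) ⧸ N) :=
    Module.Free.chooseBasis ℤ ((Fin (n+1) → ℤ) ⧸ N) with hcb
  set sec : ((Fin (n+1) → ℤ) ⧸ N) →ₗ[ℤ] (Fin (n+1) → ℤ) :=
    Module.Basis.constr cb ℤ (fun j => (Submodule.Quotient.mk_surjective N (cb j)).choose) with hsec
  have hsec_mk : ∀ y : (Fin (n+1) → ℤ) ⧸ N, N.mkQ (sec y) = y := by
    intro y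
    have : N.mkQ.comp sec = LinearMap.id := by
      apply cb.ext
      intro j
      simp only [LinearMap.comp_apply, hsec, Module.Basis.constr_basis, LinearMap.id_apply]
      exact (Submodule.Quotient.mk_surjective N (cb j)).choose_spec
    exact congrArg (fun f => f y) this
  set φ : (ℤ × ((Fin (n+1) → ℤ) ⧸ N)) →ₗ[ℤ] (Fin (n+1) → ℤ) :=
    LinearMap.coprod (LinearMap.toSpanSingleton ℤ (Fin (n+1) → ℤ) v) sec with hφ
  have hφ_apply : ∀ (k : ℤ) (y : (Fin (n+1) → ℤ) ⧸ N), φ (k, y) = k • v + sec y :=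
    fun k y => rfl
  have hinj : Function.Injective φ := by
    rw [injective_iff_map_eq_zero]
    rintro ⟨k, y⟩ h
    rw [hφ_apply] at h
    have h1 : y = 0 := by
      have h9 := congrArg N.mkQ h
      rw [map_add, _root_.map_smul, hsec_mk] at h9
      have hvN : N.mkQ v = 0 := by
        rw [Submodule.mkQ_apply, Submodule.Quotient.mk_eq_zero]
        exact Submodule.mem_span_singleton_self v
      rw [hvN, smul_zero, zero_add, map_zero] at h9
      exact h9
    rw [h1, map_zero, add_zero] at h
    have h2 : k = 0 := by
      rcases smul_eq_zero.1 h with h | h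
      · exact h
      · exact absurd h hv
    simp [h1, h2]
  have hsurj : Function.Surjective φ := by
    intro x
    have hker : x - sec (N.mkQ x) ∈ N := by
      have h10 : N.mkQ (x - sec (N.mkQ x)) = 0 := by
        rw [map_sub, hsec_mk, sub_self]
      rwa [Submodule.mkQ_apply, Submodule.Quotient.mk_eq_zero] at h10
    obtain ⟨k, hk⟩ := Submodule.mem_span_singleton.1 hker
    exact ⟨(k, N.mkQ x), by rw [hφ_apply, hk]; abel⟩
  set eφ : (ℤ × ((Fin (n+1) → ℤ) ⧸ N)) ≃ₗ[ℤ] (Fin (n+1) → ℤ) :=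
    LinearEquiv.ofBijective φ ⟨hinj, hsurj⟩ with heφ
  set bFull : Module.Basis (Fin 1 ⊕ J) ℤ (Fin (n+1) → ℤ) :=
    ((Module.Basis.singleton (Fin 1) ℤ).prod cb).map eφ with hbFull
  have hbFull_inl : bFull (Sum.inl 0) = v := by
    rw [hbFull, Module.Basis.map_apply]
    have h1 : ((Module.Basis.singleton (Fin 1) ℤ).prod cb) (Sum.inl 0)
        = ((1 : ℤ), (0 : (Fin (n+1) → ℤ) ⧸ N)) := by
      apply Prod.ext
      · rw [Module.Basis.prod_apply_inl_fst, Module.Basis.singleton_apply]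
      · rw [Module.Basis.prod_apply_inl_snd]
    rw [h1]
    show φ (1, 0) = v
    rw [hφ_apply, map_zero, add_zero, one_smul]
  set e : (Fin 1 ⊕ J) ≃ Fin (n+1) := bFull.indexEquiv (Pi.basisFun ℤ (Fin (n+1))) with he
  set e' : (Fin 1 ⊕ J) ≃ Fin (n+1) := e.trans (Equiv.swap (e (Sum.inl 0)) 0) with he'
  set B : Module.Basis (Fin (n+1)) ℤ (Fin (n+1) → ℤ) := bFull.reindex e' with hB
  have hB0 : B 0 = v := by
    rw [hB, Module.Basis.reindex_apply]
    have h11 : e'.symm 0 = Sum.inl 0 := by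
      rw [he']
      simp only [Equiv.symm_trans_apply]
      rw [Equiv.symm_swap, Equiv.swap_apply_right, Equiv.symm_apply_apply]
    rw [h11, hbFull_inl]
  set U₀ : Matrix (Fin (n+1)) (Fin (n+1)) ℤ := (Pi.basisFun ℤ (Fin (n+1))).toMatrix B with hU₀
  have hentry : ∀ i j, U₀ i j = B j i := by
    intro i j
    rw [hU₀, Module.Basis.toMatrix_apply, Pi.basisFun_repr]
  have hunit : IsUnit U₀.det := by
    have h1 : U₀ * B.toMatrix (Pi.basisFun ℤ (Fin (n+1))) = 1 :=
      Module.Basis.toMatrix_mul_toMatrix_flip _ _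
    have h12 := congrArg Matrix.det h1
    rw [det_mul, det_one] at h12
    exact IsUnit.of_mul_eq_one _ h12
  refine ⟨U₀, Int.isUnit_iff.1 hunit, fun i => ?_⟩
  rw [hentry, hB0]

/-! ### Schur complement -/

variable {n : ℕ} (R : Matrix (Fin (n+1)) (Fin (n+1)) ℝ)

noncomputable def schur : Matrix (Fin n) (Fin n) ℝ :=
  fun i j => R i.succ j.succ - R 0 i.succ * R 0 j.succ / R 0 0

lemma schur_qv (hsym : Rᵀ = R) (ha : R 0 0 ≠ 0) (t : ℝ) (y : Fin n → ℝ) :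
    qv R (Fin.cons t y) =
      R 0 0 * (t + (∑ j, y j * R 0 j.succ) / R 0 0)^2 + qv (schur R) y := by
  set a := R 0 0 with haa
  set s := ∑ j, y j * R 0 j.succ with hs
  have hRsym : ∀ i j, R i j = R j i := fun i j => by
    have h := congrFun (congrFun hsym i) j
    rw [transpose_apply] at h
    rw [← h]
  have hL : qv R (Fin.cons t y) =
      t * (a * t) + t * (∑ j, y j * R 0 j.succ)
        + ((∑ i, y i * (R i.succ 0 * t)) + ∑ i, ∑ j, y i * (R i.succ j.succ * y j)) := by
    rw [qv_eq_sum, Fin.sum_univ_succ]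
    congr 1
    · rw [Fin.sum_univ_succ]
      simp only [Fin.cons_zero, Fin.cons_succ]
      congr 1
      rw [Finset.mul_sum]
      exact Finset.sum_congr rfl fun j _ => by ring
    · rw [← Finset.sum_add_distrib]
      apply Finset.sum_congr rfl
      intro i _
      rw [Fin.sum_univ_succ]
      simp only [Fin.cons_zero, Fin.cons_succ]
  have hmid : (∑ i, y i * (R i.succ 0 * t)) = t * s := by
    rw [hs, Finset.mul_sum]
    apply Finset.sum_congr rfl
    intro i _
    rw [hRsym i.succ 0]
    ring
  have hR2 : qv (schur R) y =
      (∑ i, ∑ j, y i * (R i.succ j.succ * y j)) - s * s / a := by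
    rw [qv_eq_sum]
    have hterm : ∀ i j : Fin n, y i * (schur R i j * y j)
        = y i * (R i.succ j.succ * y j) - (y i * R 0 i.succ) * (y j * R 0 j.succ) / a := by
      intro i j
      simp only [schur, haa]
      ring
    simp_rw [hterm]
    simp only [Finset.sum_sub_distrib]
    congr 1
    have hexp : ((∑ j, y j * R 0 j.succ) * ∑ j, y j * R 0 j.succ) / a
        = ∑ x : Fin n, ∑ x1 : Fin n, y x * R 0 x.succ * (y x1 * R 0 x1.succ) / a := by
      rw [Finset.sum_mul_sum, Finset.sum_div]
      exact Finset.sum_congr rfl fun x _ => by rw [Finset.sum_div]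
    rw [hs]
    exact hexp.symm
  rw [hL, hmid, hR2, ← hs]
  field_simp
  ring

lemma schur_posDef (hR : R.PosDef) : (schur R).PosDef := by
  have hsym : Rᵀ = R := transpose_eq_of_posDef hR
  have ha : (0:ℝ) < R 0 0 := diag_pos hR 0
  refine Matrix.PosDef.of_dotProduct_mulVec_pos ?_ ?_
  · ext i j
    simp only [conjTranspose_apply, star_trivial, schur]
    have h1 : R i.succ j.succ = R j.succ i.succ := by
      have h := congrFun (congrFun hsym i.succ) j.succ
      rw [transpose_apply] at h
      rw [← h]
    rw [h1]
    ring
  · intro x hx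
    have key := schur_qv R hsym ha.ne' (-(∑ j, x j * R 0 j.succ) / R 0 0) x
    have h0 : (-(∑ j, x j * R 0 j.succ) / R 0 0 + (∑ j, x j * R 0 j.succ) / R 0 0) = 0 := by
      rw [neg_div, neg_add_cancel]
    rw [h0] at key
    simp only [ne_eq, OfNat.ofNat_ne_zero, not_false_eq_true, zero_pow, mul_zero,
      zero_add] at key
    have hpos : 0 < qv R (Fin.cons (-(∑ j, x j * R 0 j.succ) / R 0 0) x) :=
      qv_pos hR (cons_ne_zero _ hx)
    rw [key] at hpos
    simpa [qv] using hpos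

def eIdx (n : ℕ) : (Fin 1 ⊕ Fin n) ≃ Fin (n+1) :=
  finSumFinEquiv.trans (finCongr (Nat.add_comm 1 n))

lemma eIdx_inl (n : ℕ) (i : Fin 1) : eIdx n (Sum.inl i) = 0 := by
  apply Fin.ext
  simp [eIdx, finSumFinEquiv, Fin.castAdd, Fin.castLE, Fin.ext_iff, Fin.val_eq_zero i]

lemma eIdx_inr (n : ℕ) (j : Fin n) : eIdx n (Sum.inr j) = j.succ := by
  apply Fin.ext
  simp [eIdx, finSumFinEquiv, Fin.natAdd, Fin.ext_iff]
  omega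

lemma det_schur (hsym : Rᵀ = R) (ha : R 0 0 ≠ 0) :
    R.det = R 0 0 * (schur R).det := by
  classical
  set a := R 0 0 with haa
  set A : Matrix (Fin 1) (Fin 1) ℝ := Matrix.of ![![a]] with hA
  set Bm : Matrix (Fin 1) (Fin n) ℝ := Matrix.of fun _ j => R 0 j.succ with hBm
  set Cm : Matrix (Fin n) (Fin 1) ℝ := Matrix.of fun i _ => R i.succ 0 with hCm
  set Dm : Matrix (Fin n) (Fin n) ℝ := Matrix.of fun i j => R i.succ j.succ with hDm
  letI iA : Invertible A := by
    refine ⟨Matrix.of ![![a⁻¹]], ?_, ?_⟩ <;>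
    · ext i j
      have hi : i = 0 := Subsingleton.elim _ _
      have hj : j = 0 := Subsingleton.elim _ _
      subst hi; subst hj
      simp [mul_apply, Fin.sum_univ_one, hA]
      field_simp
  have hblock : R.submatrix (eIdx n) (eIdx n) = fromBlocks A Bm Cm Dm := by
    ext i j
    rcases i with i | i <;> rcases j with j | j
    · have hi : i = 0 := Subsingleton.elim _ _
      have hj : j = 0 := Subsingleton.elim _ _
      subst hi; subst hj
      simp [submatrix_apply, eIdx_inl, fromBlocks, hA, haa]
    · have hi : i = 0 := Subsingleton.elim _ _
      subst hi
      simp [submatrix_apply, eIdx_inl, eIdx_inr, fromBlocks, hBm]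
    · have hj : j = 0 := Subsingleton.elim _ _
      subst hj
      simp [submatrix_apply, eIdx_inl, eIdx_inr, fromBlocks, hCm]
    · simp [submatrix_apply, eIdx_inr, fromBlocks, hDm]
  have hdet1 : R.det = (fromBlocks A Bm Cm Dm).det := by
    rw [← hblock, det_submatrix_equiv_self]
  rw [hdet1, det_fromBlocks₁₁]
  congr 1
  · rw [hA]; exact det_fin_one_of a
  · congr 1
    ext i j
    have hCAB : (Cm * ⅟A * Bm) i j = R i.succ 0 * a⁻¹ * R 0 j.succ := by
      have hinvA : (⅟A : Matrix (Fin 1) (Fin 1) ℝ) = Matrix.of ![![a⁻¹]] := rfl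
      rw [hinvA]
      simp [mul_apply, Fin.sum_univ_one, hCm, hBm]
    simp only [Matrix.sub_apply, hCAB, hDm, schur, of_apply]
    have h1 : R i.succ 0 = R 0 i.succ := by
      have h := congrFun (congrFun hsym i.succ) 0
      rw [transpose_apply] at h
      rw [← h]
    rw [h1]
    ring

/-! ### Misc cast lemmas -/

lemma castMat_mul {d : ℕ} (A B : Matrix (Fin d) (Fin d) ℤ) :
    castMat (A * B) = castMat A * castMat B := by
  ext i j
  simp [castMat, Matrix.map_apply, mul_apply]

lemma castMat_det {d : ℕ} (A : Matrix (Fin d) (Fin d) ℤ) :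
    (castMat A).det = (A.det : ℝ) := by
  rw [castMat]
  exact (RingHom.map_det (Int.castRingHom ℝ) A).symm

lemma castMat_mulVec {d : ℕ} (A : Matrix (Fin d) (Fin d) ℤ) (x : Fin d → ℤ) :
    castMat A *ᵥ cv x = cv (A *ᵥ x) := by
  funext i
  simp [castMat, cv, mulVec, dotProduct, Matrix.map_apply]

lemma intMulVec_ne_zero {d : ℕ} {A : Matrix (Fin d) (Fin d) ℤ}
    (hA : A.det = 1 ∨ A.det = -1) {x : Fin d → ℤ} (hx : x ≠ 0) : A *ᵥ x ≠ 0 := by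
  intro h
  apply hx
  have h1 : A.adjugate *ᵥ (A *ᵥ x) = A.det • x := by
    rw [mulVec_mulVec, adjugate_mul, smul_mulVec, one_mulVec]
  rw [h, mulVec_zero] at h1
  funext i
  have h2 := congrFun h1 i
  simp only [Pi.smul_apply, smul_eq_mul, Pi.zero_apply] at h2 ⊢
  rcases hA with hA | hA <;> rw [hA] at h2 <;> omega

lemma tri (n : ℕ) : (n+1) * n / 2 = n + n * (n-1) / 2 := by
  cases n with
  | zero => rfl
  | succ m =>
    obtain ⟨d, hd⟩ := (Nat.even_mul_succ_self m)
    have h1 : (m+2)*(m+1) = (m*(m+1)) + 2*(m+1) := by ring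
    rw [hd] at h1
    have h2 : (m+1)*m = d + d := by rw [mul_comm]; exact hd
    simp only [Nat.add_sub_cancel]
    rw [h1, h2]
    omega

end H18

namespace H18

theorem aux : ∀ (d : ℕ) (Q : Matrix (Fin d) (Fin d) ℝ), Q.PosDef →
    ∃ U : Matrix (Fin d) (Fin d) ℤ, (U.det = 1 ∨ U.det = -1) ∧
      ∏ i, ((castMat U)ᵀ * Q * castMat U) i i ≤ (4/3 : ℝ) ^ (d * (d-1)/2) * Q.det := by
  intro d
  induction d with
  | zero =>
    intro Q hQ
    refine ⟨1, Or.inl (by simp), ?_⟩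
    rw [Matrix.det_fin_zero]
    rw [Finset.univ_eq_empty, Finset.prod_empty]
    norm_num
  | succ n IH =>
    intro Q hQ
    classical
    -- minimal vector
    obtain ⟨v, hvne, hvmin⟩ := exists_min Q hQ
    -- primitivity
    have hprim : Finset.gcd Finset.univ v = 1 := by
      set g := Finset.gcd Finset.univ v with hg
      have hgdvd : ∀ i, g ∣ v i := fun i => Finset.gcd_dvd (Finset.mem_univ i)
      have hgne : g ≠ 0 := by
        intro h
        apply hvne
        funext i
        exact Finset.gcd_eq_zero_iff.1 h i (Finset.mem_univ i)
      set w : Fin (n+1) → ℤ := fun i => v i / g with hw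
      have hvw : ∀ i, v i = g * w i := fun i => (Int.mul_ediv_cancel' (hgdvd i)).symm
      have hwne : w ≠ 0 := by
        intro h
        apply hvne
        funext i
        rw [hvw i, congrFun h i]
        simp
      have hcvw : cv v = (g : ℝ) • cv w := by
        funext i
        simp only [cv, Pi.smul_apply, smul_eq_mul, hvw i]
        push_cast
        ring
      have hscale : qv Q (cv v) = (g:ℝ)^2 * qv Q (cv w) := by
        rw [hcvw, qv, mulVec_smul, dotProduct_smul, smul_dotProduct]
        simp only [smul_eq_mul, qv]
        ring
      have hmin := hvmin w hwne
      have hwpos : 0 < qv Q (cv w) := qv_pos hQ (by rwa [Ne, cv_eq_zero])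
      have hg2r : (g:ℝ)^2 ≤ 1 := by nlinarith [hscale, hmin, hwpos]
      have hg2 : g^2 ≤ 1 := by exact_mod_cast hg2r
      have hgnn : 0 ≤ g := by
        have hnorm : normalize g = g := Finset.normalize_gcd
        have habs : |g| = g := by rw [Int.abs_eq_normalize, hnorm]
        rw [← habs]
        exact abs_nonneg g
      have h1g : 1 ≤ g := by omega
      nlinarith
    obtain ⟨U₀, hU₀det, hU₀col⟩ := exists_unimodular_col v hvne hprim
    set P := castMat U₀ with hP
    have hPdet : P.det = (U₀.det : ℝ) := castMat_det U₀
    have hPne : P.det ≠ 0 := by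
      rcases hU₀det with h | h <;> rw [hPdet, h] <;> norm_num
    set R := Pᵀ * Q * P with hR
    have hRpd : R.PosDef := posDef_conj hQ hPne
    have hRsymT : Rᵀ = R := transpose_eq_of_posDef hRpd
    have ha : (0:ℝ) < R 0 0 := diag_pos hRpd 0
    have hQRqv : ∀ x : Fin (n+1) → ℤ, qv R (cv x) = qv Q (cv (U₀ *ᵥ x)) := by
      intro x
      rw [hR, qv_conj, hP, castMat_mulVec]
    have h00 : R 0 0 = qv Q (cv v) := by
      rw [hR, diag_congr]
      congr 1
      funext k
      simp [hP, castMat, cv, Matrix.map_apply, hU₀col k]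
    have hRmin : ∀ x : Fin (n+1) → ℤ, x ≠ 0 → R 0 0 ≤ qv R (cv x) := by
      intro x hx
      rw [h00, hQRqv x]
      exact hvmin _ (intMulVec_ne_zero hU₀det hx)
    set Q₁ := schur R with hQ₁
    have hQ₁pd : Q₁.PosDef := schur_posDef R hRpd
    have hdetR : R.det = R 0 0 * Q₁.det := det_schur R hRsymT ha.ne'
    -- minimum transfer to the Schur complement
    have hmin₁ : ∀ y : Fin n → ℤ, y ≠ 0 → 3/4 * R 0 0 ≤ qv Q₁ (cv y) := by
      intro y hy
      set s := ∑ j, (cv y) j * R 0 j.succ with hs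
      set k : ℤ := round (-(s / R 0 0)) with hk
      have hxne : (Fin.cons k y : Fin (n+1) → ℤ) ≠ 0 := by
        intro h
        apply hy
        funext i
        have := congrFun h i.succ
        simpa using this
      have hcast : cv (Fin.cons k y) = Fin.cons (k:ℝ) (cv y) := by
        funext i
        refine Fin.cases ?_ ?_ i <;> simp [cv]
      have hkey := schur_qv R hRsymT ha.ne' (k:ℝ) (cv y)
      have hmin := hRmin _ hxne
      rw [hcast, hkey, ← hs] at hmin
      have hsq : ((k:ℝ) + s / R 0 0)^2 ≤ 1/4 := by
        have h1 : |(-(s / R 0 0)) - (round (-(s / R 0 0)) : ℝ)| ≤ 1/2 := abs_sub_round _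
        have h2 : |(k:ℝ) + s / R 0 0| ≤ 1/2 := by
          rw [hk]
          rw [abs_sub_comm] at h1
          calc |(round (-(s / R 0 0)) : ℝ) + s / R 0 0|
              = |(round (-(s / R 0 0)) : ℝ) - (-(s / R 0 0))| := by ring_nf
            _ ≤ 1/2 := h1
        nlinarith [abs_nonneg ((k:ℝ) + s / R 0 0), sq_abs ((k:ℝ) + s / R 0 0)]
      nlinarith [mul_le_mul_of_nonneg_left hsq ha.le]
    -- induction hypothesis
    obtain ⟨V, hVdet, hVprod⟩ := IH Q₁ hQ₁pd
    set d1 : Fin n → ℝ := fun j => ((castMat V)ᵀ * Q₁ * castMat V) j j with hd1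
    have hd1qv : ∀ j, d1 j = qv Q₁ (cv (fun i => V i j)) := by
      intro j
      rw [hd1]
      exact diag_congr Q₁ (castMat V) j
    have hcolne : ∀ j, (fun i => V i j) ≠ (0 : Fin n → ℤ) := by
      intro j h
      have hz : V.det = 0 := det_eq_zero_of_column_eq_zero j (fun i => congrFun h i)
      rcases hVdet with h' | h' <;> omega
    have hd1lb : ∀ j, 3/4 * R 0 0 ≤ d1 j := by
      intro j
      rw [hd1qv]
      exact hmin₁ _ (hcolne j)
    -- the shear matrix W
    set kk : Fin n → ℤ := fun j =>
      round (-((∑ i, (cv (fun i => V i j)) i * R 0 i.succ) / R 0 0)) with hkk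
    set W : Matrix (Fin (n+1)) (Fin (n+1)) ℤ :=
      Matrix.of (Fin.cons (Fin.cons 1 kk) (fun i => Fin.cons 0 (fun j => V i j))) with hW
    have hW00 : W 0 0 = 1 := rfl
    have hW0s : ∀ j : Fin n, W 0 j.succ = kk j := fun j => rfl
    have hWs0 : ∀ i : Fin n, W i.succ 0 = 0 := fun i => rfl
    have hWss : ∀ (i : Fin n) (j : Fin n), W i.succ j.succ = V i j := fun i j => rfl
    -- determinant of W
    have hWdet : W.det = V.det := by
      have hblock : W.submatrix (eIdx n) (eIdx n)
          = fromBlocks (Matrix.of ![![(1:ℤ)]]) (Matrix.of fun _ j => kk j) 0 V := by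
        ext i j
        rcases i with i | i <;> rcases j with j | j
        · have hi : i = 0 := Subsingleton.elim _ _
          have hj : j = 0 := Subsingleton.elim _ _
          subst hi; subst hj
          simp [submatrix_apply, eIdx_inl, fromBlocks, hW00]
        · have hi : i = 0 := Subsingleton.elim _ _
          subst hi
          simp [submatrix_apply, eIdx_inl, eIdx_inr, fromBlocks, hW0s]
        · have hj : j = 0 := Subsingleton.elim _ _
          subst hj
          simp [submatrix_apply, eIdx_inl, eIdx_inr, fromBlocks, hWs0]
        · simp [submatrix_apply, eIdx_inr, fromBlocks, hWss]
      have h1 : W.det = (fromBlocks (Matrix.of ![![(1:ℤ)]]) (Matrix.of fun _ j => kk j) 0 V).det := by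
        rw [← hblock, det_submatrix_equiv_self]
      rw [h1, det_fromBlocks_zero₂₁, det_fin_one_of, one_mul]
    refine ⟨U₀ * W, ?_, ?_⟩
    · have h1 : (U₀ * W).det = U₀.det * V.det := by rw [det_mul, hWdet]
      rcases hU₀det with h2 | h2 <;> rcases hVdet with h3 | h3 <;>
        rw [h1, h2, h3] <;> norm_num
    -- the inequality
    set Q' := (castMat (U₀ * W))ᵀ * Q * castMat (U₀ * W) with hQ'
    have hfact : Q' = (castMat W)ᵀ * R * castMat W := by
      rw [hQ', hR, castMat_mul, transpose_mul, hP]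
      simp only [Matrix.mul_assoc]
    have hdiag : ∀ i, Q' i i = qv R (fun l => ((W l i : ℤ) : ℝ)) := by
      intro i
      rw [hfact]
      exact diag_congr R (castMat W) i
    have hQ00 : Q' 0 0 = R 0 0 := by
      rw [hdiag 0]
      have hcol0 : (fun l => ((W l 0 : ℤ) : ℝ)) = Fin.cons 1 (0 : Fin n → ℝ) := by
        funext l
        refine Fin.cases ?_ ?_ l
        · simp [hW00]
        · intro i; simp [hWs0]
      rw [hcol0, schur_qv R hRsymT ha.ne' 1 0]
      simp [qv]
    have hQsucc : ∀ j : Fin n, Q' j.succ j.succ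
        = R 0 0 * ((kk j : ℝ) + (∑ i, (cv (fun i => V i j)) i * R 0 i.succ) / R 0 0)^2
          + qv Q₁ (cv (fun i => V i j)) := by
      intro j
      rw [hdiag j.succ]
      have hcol : (fun l => ((W l j.succ : ℤ) : ℝ))
          = Fin.cons ((kk j : ℝ)) (cv (fun i => V i j)) := by
        funext l
        refine Fin.cases ?_ ?_ l
        · simp [hW0s]
        · intro i; simp [hWss, cv]
      rw [hcol, schur_qv R hRsymT ha.ne' _ _]
    have hQsucc_le : ∀ j : Fin n, Q' j.succ j.succ ≤ (4/3) * d1 j := by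
      intro j
      rw [hQsucc j, ← hd1qv j]
      set s := ∑ i, (cv (fun i => V i j)) i * R 0 i.succ with hs
      have hsq : ((kk j : ℝ) + s / R 0 0)^2 ≤ 1/4 := by
        have h1 : |(-(s / R 0 0)) - (round (-(s / R 0 0)) : ℝ)| ≤ 1/2 := abs_sub_round _
        have h2 : |(kk j : ℝ) + s / R 0 0| ≤ 1/2 := by
          rw [hkk]
          rw [abs_sub_comm] at h1
          calc |(round (-(s / R 0 0)) : ℝ) + s / R 0 0|
              = |(round (-(s / R 0 0)) : ℝ) - (-(s / R 0 0))| := by ring_nf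
            _ ≤ 1/2 := h1
        nlinarith [abs_nonneg ((kk j : ℝ) + s / R 0 0), sq_abs ((kk j : ℝ) + s / R 0 0)]
      have h3 := hd1lb j
      nlinarith [mul_le_mul_of_nonneg_left hsq ha.le]
    have hQsucc_pos : ∀ j : Fin n, 0 < Q' j.succ j.succ := by
      intro j
      rw [hQsucc j, ← hd1qv j]
      have h1 : 0 < qv Q₁ (cv (fun i => V i j)) :=
        qv_pos hQ₁pd (by rw [Ne, cv_eq_zero]; exact hcolne j)
      rw [hd1qv j]
      nlinarith [sq_nonneg ((kk j : ℝ) + (∑ i, (cv (fun i => V i j)) i * R 0 i.succ) / R 0 0),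
        ha.le]
    -- assemble
    rw [Fin.prod_univ_succ]
    have hprod1 : ∏ j : Fin n, Q' j.succ j.succ ≤ ∏ j : Fin n, (4/3) * d1 j := by
      apply Finset.prod_le_prod
      · intro j _; exact (hQsucc_pos j).le
      · intro j _; exact hQsucc_le j
    have hprod2 : ∏ j : Fin n, ((4:ℝ)/3) * d1 j = (4/3)^n * ∏ j, d1 j := by
      rw [Finset.prod_mul_distrib, Finset.prod_const, Finset.card_univ, Fintype.card_fin]
    have hd1pos : ∀ j, 0 < d1 j := by
      intro j
      rw [hd1qv j]
      exact qv_pos hQ₁pd (by rw [Ne, cv_eq_zero]; exact hcolne j)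
    have hQ₁det_pos : 0 < Q₁.det := hQ₁pd.det_pos
    calc Q' 0 0 * ∏ j : Fin n, Q' j.succ j.succ
        ≤ Q' 0 0 * ((4/3)^n * ∏ j, d1 j) := by
          rw [← hprod2]
          apply mul_le_mul_of_nonneg_left hprod1
          rw [hQ00]; exact ha.le
      _ ≤ Q' 0 0 * ((4/3)^n * ((4/3 : ℝ) ^ (n * (n-1)/2) * Q₁.det)) := by
          apply mul_le_mul_of_nonneg_left _ (by rw [hQ00]; exact ha.le)
          apply mul_le_mul_of_nonneg_left hVprod (by positivity)
      _ = (4/3 : ℝ) ^ (n + n * (n-1)/2) * (R 0 0 * Q₁.det) := by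
          rw [hQ00, pow_add]
          ring
      _ = (4/3 : ℝ) ^ ((n+1) * n / 2) * R.det := by
          rw [hdetR, tri n]
      _ = (4/3 : ℝ) ^ ((n+1) * ((n+1) - 1) / 2) * Q.det := by
          have hRdet : R.det = Q.det := by
            rw [hR, det_mul, det_mul, det_transpose, hPdet]
            rcases hU₀det with h | h <;> rw [h] <;> push_cast <;> ring
          rw [hRdet]
          norm_num

end H18

/-- Hermite reduction. -/
theorem stmt18 (d : ℕ) (Q : Matrix (Fin d) (Fin d) ℝ) (hQ : Q.PosDef) :
    ∃ U : Matrix (Fin d) (Fin d) ℤ, (U.det = 1 ∨ U.det = -1) ∧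
      ∏ i, ((castMat U)ᵀ * Q * castMat U) i i
        ≤ (4 / 3 : ℝ) ^ (d * (d - 1) / 2) * ((castMat U)ᵀ * Q * castMat U).det := by
  obtain ⟨U, hUdet, hUle⟩ := H18.aux d Q hQ
  refine ⟨U, hUdet, ?_⟩
  have hdet : ((castMat U)ᵀ * Q * castMat U).det = Q.det := by
    rw [det_mul, det_mul, det_transpose, H18.castMat_det]
    rcases hUdet with h | h <;> rw [h] <;> push_cast <;> ring
  rw [hdet]
  exact hUle
end
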